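/- Let G be a graph, f : V(G) → ℕ, and L an f-list assignment such that every proper L-colouring of G is injective (uses |V(G)| distinct colours). Let Φ(G,L) = { φ(V(G)) : φ is a proper L-colouring of G } be the set of colour sets used by proper L-colourings. If m < |Φ(G,L)|, then for every extension L' of L to G ⊕ K̄_m (with each new vertex receiving a list of size |V(G)|), G ⊕ K̄_m has a proper L'-colouring; and if m = |Φ(G,L)|, then there exists an extension L' of L to G ⊕ K̄_m such that G ⊕ K̄_m has no proper L'-colouring. -/

import Mathlib

/-- The join `G ⊕ K̄_m` of a graph `G` with the edgeless graph on `m` vertices. -/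
def joinK {V : Type*} (G : SimpleGraph V) (m : ℕ) : SimpleGraph (V ⊕ Fin m) where
  Adj a b :=
    match a, b with
    | Sum.inl u, Sum.inl v => G.Adj u v
    | Sum.inl _, Sum.inr _ => True
    | Sum.inr _, Sum.inl _ => True
    | Sum.inr _, Sum.inr _ => False
  symm := ⟨by
    rintro (u | i) (v | j) h
    · exact G.adj_symm h
    · trivial
    · trivial
    · exact h⟩
  loopless := ⟨by
    rintro (u | i) h
    · exact G.irrefl h
    · exact h⟩

/-- `Φ(G, L)`: the set of colour sets `φ(V(G))` used by proper `L`-colourings of `G`. -/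
def PhiSet {V : Type*} [Fintype V] (G : SimpleGraph V) (L : V → Finset ℕ) :
    Set (Finset ℕ) :=
  {S | ∃ φ : V → ℕ, (∀ v, φ v ∈ L v) ∧ (∀ ⦃u v⦄, G.Adj u v → φ u ≠ φ v) ∧
    Finset.univ.image φ = S}

/-- Suppose every proper `L`-colouring of `G` is injective. If `m < |Φ(G,L)|` then every
extension of `L` to `G ⊕ K̄_m` (each new vertex getting a list of size `|V(G)|`) admits a
proper colouring; and if `m = |Φ(G,L)|` then some extension admits no proper colouring. -/
theorem stmt_10 {V : Type*} [Fintype V] (G : SimpleGraph V) (f : V → ℕ)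
    (L : V → Finset ℕ) (hL : ∀ v, (L v).card = f v)
    (hinj : ∀ φ : V → ℕ, (∀ v, φ v ∈ L v) → (∀ ⦃u v⦄, G.Adj u v → φ u ≠ φ v) →
      Function.Injective φ) :
    (∀ m, m < Set.ncard (PhiSet G L) →
      ∀ L' : V ⊕ Fin m → Finset ℕ,
        (∀ v, L' (Sum.inl v) = L v) →
        (∀ j, (L' (Sum.inr j)).card = Fintype.card V) →
        ∃ c : V ⊕ Fin m → ℕ, (∀ a, c a ∈ L' a) ∧
          ∀ ⦃a b⦄, (joinK G m).Adj a b → c a ≠ c b) ∧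
    (∀ m, m = Set.ncard (PhiSet G L) →
      ∃ L' : V ⊕ Fin m → Finset ℕ,
        (∀ v, L' (Sum.inl v) = L v) ∧
        (∀ j, (L' (Sum.inr j)).card = Fintype.card V) ∧
        ¬ ∃ c : V ⊕ Fin m → ℕ, (∀ a, c a ∈ L' a) ∧
          ∀ ⦃a b⦄, (joinK G m).Adj a b → c a ≠ c b) := by
  classical
  have hcard : ∀ S ∈ PhiSet G L, S.card = Fintype.card V := by
    rintro S ⟨φ, hm, ha, rfl⟩
    rw [Finset.card_image_of_injective _ (hinj φ hm ha), Finset.card_univ]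
  have hfin : (PhiSet G L).Finite := by
    apply Set.Finite.subset (Finset.finite_toSet ((Finset.univ.biUnion L).powerset))
    rintro S ⟨φ, hm, ha, rfl⟩
    rw [Finset.mem_coe, Finset.mem_powerset]
    intro x hx
    obtain ⟨v, -, rfl⟩ := Finset.mem_image.mp hx
    exact Finset.mem_biUnion.mpr ⟨v, Finset.mem_univ v, hm v⟩
  constructor
  · intro m hm L' hL1 hL2
    -- find S ∈ Φ avoided by all new lists
    have : ∃ S ∈ PhiSet G L, ∀ j : Fin m, L' (Sum.inr j) ≠ S := by
      by_contra h
      push_neg at h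
      have hsub : PhiSet G L ⊆ ↑(Finset.univ.image fun j : Fin m => L' (Sum.inr j)) := by
        intro S hS
        obtain ⟨j, hj⟩ := h S hS
        exact Finset.mem_coe.mpr (Finset.mem_image.mpr ⟨j, Finset.mem_univ j, hj⟩)
      have := Set.ncard_le_ncard hsub (Finset.finite_toSet _)
      rw [Set.ncard_coe_finset] at this
      have h2 : (Finset.image (fun j : Fin m => L' (Sum.inr j)) Finset.univ).card ≤ m :=
        Finset.card_image_le.trans (by simp)
      omega
    obtain ⟨S, hS, hav⟩ := this
    obtain ⟨φ, hφm, hφa, hφi⟩ := hS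
    have hpick : ∀ j : Fin m, ∃ x, x ∈ L' (Sum.inr j) ∧ x ∉ S := by
      intro j
      by_contra h
      push_neg at h
      exact hav j (Finset.eq_of_subset_of_card_le h
        (by rw [hL2 j, hcard S ⟨φ, hφm, hφa, hφi⟩]))
    choose g hg1 hg2 using hpick
    refine ⟨Sum.elim φ g, ?_, ?_⟩
    · rintro (v | j)
      · simpa [hL1 v] using hφm v
      · exact hg1 j
    · rintro (u | i) (v | j) hadj
      · exact hφa hadj
      · intro h
        refine hg2 j ?_
        show Sum.elim φ g (Sum.inr j) ∈ S
        rw [← h]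
        exact hφi ▸ Finset.mem_image_of_mem φ (Finset.mem_univ u)
      · intro h
        refine hg2 i ?_
        show Sum.elim φ g (Sum.inr i) ∈ S
        rw [h]
        exact hφi ▸ Finset.mem_image_of_mem φ (Finset.mem_univ v)
      · exact absurd hadj (by simp [joinK])
  · intro m hm
    have hFc : hfin.toFinset.card = m := by
      rw [hm, Set.ncard_eq_toFinset_card _ hfin]
    let e := hfin.toFinset.equivFinOfCardEq hFc
    refine ⟨Sum.elim L (fun j => (e.symm j : Finset ℕ)), fun v => rfl, ?_, ?_⟩
    · intro j
      exact hcard _ (hfin.mem_toFinset.mp (e.symm j).2)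
    · rintro ⟨c, hcm, hca⟩
      set φ := fun v => c (Sum.inl v) with hφ
      have hφm : ∀ v, φ v ∈ L v := fun v => hcm (Sum.inl v)
      have hφa : ∀ ⦃u v⦄, G.Adj u v → φ u ≠ φ v := fun u v h => hca h
      have hSΦ : Finset.univ.image φ ∈ PhiSet G L := ⟨φ, hφm, hφa, rfl⟩
      have hSF : Finset.univ.image φ ∈ hfin.toFinset := hfin.mem_toFinset.mpr hSΦ
      set j := e ⟨_, hSF⟩ with hj
      have hLj : (Sum.elim L (fun j => (e.symm j : Finset ℕ)) (Sum.inr j) : Finset ℕ)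
          = Finset.univ.image φ := by
        simp [hj, Equiv.symm_apply_apply]
      have := hcm (Sum.inr j)
      rw [hLj] at this
      obtain ⟨v, _, hv⟩ := Finset.mem_image.mp this
      exact hca (show (joinK G m).Adj (Sum.inr j) (Sum.inl v) from trivial) hv.symm
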